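/- Let V be a real normed space with closed unit ball B = B(0,1), and suppose the segment [x,y] (the set of convex combinations of x and y) is an extreme line of B, i.e., [x,y] ⊆ B and whenever a point of [x,y] is a convex combination of points s, t ∈ B, then s, t ∈ [x,y]. Then [x,y] = B(0,1) ∩ B(x + y, 1). -/
import Mathlib


/-- The segment `[x,y]` is an extreme line of the convex body `A`: it is contained
in `A`, and whenever a point of `[x,y]` is a convex combination of `s, t ∈ A`,
both `s` and `t` lie in `[x,y]`. -/
def IsExtremeLine {V : Type*} [NormedAddCommGroup V] [NormedSpace ℝ V]
    (A : Set V) (x y : V) : Prop :=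
  segment ℝ x y ⊆ A ∧
    ∀ z ∈ segment ℝ x y, ∀ s ∈ A, ∀ t ∈ A,
      z ∈ segment ℝ s t → s ∈ segment ℝ x y ∧ t ∈ segment ℝ x y

/-- If `[x,y]` is an extreme line of the closed unit ball of a
real normed space, then `[x,y] = B(0,1) ∩ B(x + y, 1)`. -/
theorem extremeLine_eq_ball_inter
    {V : Type*} [NormedAddCommGroup V] [NormedSpace ℝ V]
    (x y : V) (h : IsExtremeLine (Metric.closedBall (0 : V) 1) x y) :
    segment ℝ x y = Metric.closedBall (0 : V) 1 ∩ Metric.closedBall (x + y) 1 := by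
  obtain ⟨hsub, hext⟩ := h
  ext w
  constructor
  · rintro hw
    refine ⟨hsub hw, ?_⟩
    obtain ⟨a, b, ha, hb, hab, rfl⟩ := hw
    have hmem : b • x + a • y ∈ segment ℝ x y := ⟨b, a, hb, ha, by linarith, rfl⟩
    have h1 := hsub hmem
    simp only [Metric.mem_closedBall, dist_zero_right] at h1
    have heq : a • x + b • y - (x + y) = -(b • x + a • y) := by
      have hb' : (b : ℝ) = 1 - a := by linarith
      subst hb'
      module
    simp only [Metric.mem_closedBall, dist_eq_norm, heq, norm_neg]
    exact h1
  · rintro ⟨hw1, hw2⟩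
    have hm : (2⁻¹ : ℝ) • x + (2⁻¹ : ℝ) • y ∈ segment ℝ x y :=
      ⟨2⁻¹, 2⁻¹, by norm_num, by norm_num, by norm_num, rfl⟩
    have hw' : x + y - w ∈ Metric.closedBall (0 : V) 1 := by
      simp only [Metric.mem_closedBall, dist_zero_right]
      have := hw2
      simp only [Metric.mem_closedBall, dist_eq_norm] at this
      calc ‖x + y - w‖ = ‖w - (x + y)‖ := (norm_sub_rev _ _)
        _ ≤ 1 := this
    have hmid : (2⁻¹ : ℝ) • x + (2⁻¹ : ℝ) • y ∈ segment ℝ w (x + y - w) :=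
      ⟨2⁻¹, 2⁻¹, by norm_num, by norm_num, by norm_num, by module⟩
    exact (hext _ hm w hw1 _ hw' hmid).1
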